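/- (Upper bound: s ≤ −p*) Suppose that for every i ∈ J the field f_i(σ) := (f_i(σ(z)))_{z∈ℤ^d} is c.a.d.i., c.l. and R_ℓ-invariant. Define s(x) := inf{ liminf_{n→∞} |Λ(n)|^{−1} log P(m_{Λ(n)} σ ∈ A) : A a translate of an element of C_0(X) containing x }, p(λ) := lim_{n→∞} |Λ(n)|^{−1} log E[exp λ(Σ_{z∈Λ(n)} σ(z))] for λ a τ-continuous linear functional on X (this limit exists), and p*(x) := sup_{λ∈X*}(λ(x) − p(λ)). Then for every x ∈ X, s(x) ≤ −p*(x). -/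

import Mathlib

set_option linter.unusedSectionVars false


open MeasureTheory Filter Topology Pointwise

noncomputable section

/-- The lattice ℤ^d. -/
abbrev ZLat (d : ℕ) := Fin d → ℤ

/-- The box Λ(z;n) = z + ([0,n) ∩ ℤ)^d. -/
def box (d : ℕ) (z : ZLat d) (n : ℕ) : Finset (ZLat d) :=
  Fintype.piFinset fun k => Finset.Ico (z k) (z k + n)

/-- Sup-norm distance on ℤ^d. -/
def supdist {d : ℕ} (x y : ZLat d) : ℝ :=
  ((Finset.univ.sup fun k => (x k - y k).natAbs : ℕ) : ℝ)

/-- Configuration space Y^{ℤ^d}. -/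
abbrev Cfg (d : ℕ) (Y : Type*) := ZLat d → Y

section Defs

variable {d : ℕ} {Y : Type*}
variable [TopologicalSpace Y] [AddCommGroup Y] [Module ℝ Y] [MeasurableSpace Y]

/-- Conditions on the decoupling parameters (g, c): nonnegative, g(n)/n → 0 and
c(n)/|Λ(n)| → 0. -/
structure CadiParams (d : ℕ) (g c : ℕ → ℝ) : Prop where
  g_nonneg : ∀ n, 0 ≤ g n
  c_nonneg : ∀ n, 0 ≤ c n
  g_small : Tendsto (fun n : ℕ => g n / n) atTop (𝓝 0)
  c_small : Tendsto (fun n : ℕ => c n / (n : ℝ) ^ d) atTop (𝓝 0)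

/-- μ (the law of a field η) is convexly asymptotically decoupled from below (c.a.d.i.)
with parameter (g, c): for every box Λ(z;n), every finite S at sup-distance > g(n) from
the box, and all open convex C, D in the respective finite products,
P(η_{Λ(z;n)} ∈ C, η_S ∈ D) ≥ e^{-c(n)} P(η_{Λ(z;n)} ∈ C) P(η_S ∈ D). -/
def IsCadi (μ : Measure (Cfg d Y)) (g c : ℕ → ℝ) : Prop :=
  ∀ (z : ZLat d) (n : ℕ), 0 < n → ∀ S : Finset (ZLat d),
    (∀ x ∈ S, ∀ w ∈ box d z n, g n < supdist x w) →
    ∀ C : Set (↥(box d z n) → Y), IsOpen C → Convex ℝ C →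
    ∀ D : Set (↥S → Y), IsOpen D → Convex ℝ D →
      ENNReal.ofReal (Real.exp (-(c n))) * μ {ξ | (fun w : ↥(box d z n) => ξ w.1) ∈ C}
          * μ {ξ | (fun w : ↥S => ξ w.1) ∈ D}
        ≤ μ {ξ | (fun w : ↥(box d z n) => ξ w.1) ∈ C ∧ (fun w : ↥S => ξ w.1) ∈ D}

/-- Conditions on the local-control parameters (t, α): on open convex neighbourhoods of 0,
t takes values in (0,∞) and α in (0,1]. -/
structure ClParams (t α : Set Y → ℝ) : Prop where
  t_pos : ∀ V : Set Y, IsOpen V → Convex ℝ V → (0 : Y) ∈ V → 0 < t V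
  α_pos : ∀ V : Set Y, IsOpen V → Convex ℝ V → (0 : Y) ∈ V → 0 < α V
  α_le_one : ∀ V : Set Y, IsOpen V → Convex ℝ V → (0 : Y) ∈ V → α V ≤ 1

/-- μ (the law of a field η) is locally controlled (c.l.) with parameter (t, α):
for every open convex neighbourhood V of 0, every site z, every finite S ⊆ ℤ^d \ {z}
and every open convex D ⊆ Y^S, P(η(z) ∈ t(V)·V, η_S ∈ D) ≥ α(V) P(η_S ∈ D). -/
def IsCl (μ : Measure (Cfg d Y)) (t α : Set Y → ℝ) : Prop :=
  ∀ V : Set Y, IsOpen V → Convex ℝ V → (0 : Y) ∈ V →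
  ∀ z : ZLat d, ∀ S : Finset (ZLat d), z ∉ S →
  ∀ D : Set (↥S → Y), IsOpen D → Convex ℝ D →
    ENNReal.ofReal (α V) * μ {ξ | (fun w : ↥S => ξ w.1) ∈ D}
      ≤ μ {ξ | ξ z ∈ (t V • V : Set Y) ∧ (fun w : ↥S => ξ w.1) ∈ D}

/-- μ is invariant under the translations of the sublattice R_ℓ = (ℓℤ)^d. -/
def IsRlInv (μ : Measure (Cfg d Y)) (ℓ : ℕ) : Prop :=
  ∀ a : ZLat d, (∀ k, (ℓ : ℤ) ∣ a k) →
    Measure.map (fun ξ : Cfg d Y => fun z => ξ (z + a)) μ = μ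

/-- Empirical mean m_Λ ξ = |Λ|⁻¹ Σ_{z∈Λ} ξ(z) over a finite box. -/
def mAvg (Λ : Finset (ZLat d)) (ξ : Cfg d Y) : Y :=
  (Λ.card : ℝ)⁻¹ • ∑ z ∈ Λ, ξ z

/-- Finite-volume pressure p_Λ(λ) = |Λ|⁻¹ log E[exp λ(Σ_{z∈Λ} η(z))], valued in [-∞,+∞]. -/
def pressΛ (μ : Measure (Cfg d Y)) (Λ : Finset (ZLat d)) (l : Y →L[ℝ] ℝ) : EReal :=
  (((Λ.card : ℝ)⁻¹ : ℝ) : EReal) *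
    ENNReal.log (∫⁻ ξ, ENNReal.ofReal (Real.exp (l (∑ z ∈ Λ, ξ z))) ∂μ)

/-- Entropy s(y) = inf over open convex sets A ∋ y of
liminf_n |Λ(n)|⁻¹ log P(m_{Λ(n)} η ∈ A). -/
def entropy (μ : Measure (Cfg d Y)) (y : Y) : EReal :=
  ⨅ A ∈ {A : Set Y | IsOpen A ∧ Convex ℝ A ∧ y ∈ A},
    Filter.liminf
      (fun n : ℕ => ((((box d 0 n).card : ℝ)⁻¹ : ℝ) : EReal) *
        ENNReal.log (μ {ξ | mAvg (box d 0 n) ξ ∈ A}))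
      Filter.atTop

end Defs
section Projective

variable {J : Type*} [Preorder J]
variable {X : Type*} [AddCommGroup X] [Module ℝ X]
variable {Y : J → Type*} [∀ i, AddCommGroup (Y i)] [∀ i, Module ℝ (Y i)]
  [∀ i, UniformSpace (Y i)] [∀ i, IsUniformAddGroup (Y i)] [∀ i, ContinuousSMul ℝ (Y i)]
  [∀ i, LocallyConvexSpace ℝ (Y i)] [∀ i, CompleteSpace (Y i)]
  [∀ i, TopologicalSpace.SeparableSpace (Y i)] [∀ i, TopologicalSpace.MetrizableSpace (Y i)]

/-- The basic sets C₀(X) = { f_i⁻¹(t·V_i) : i ∈ J, t > 0, V_i an open convex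
neighbourhood of 0 in Y_i }. -/
def projC0 (f : ∀ i, X →ₗ[ℝ] Y i) : Set (Set X) :=
  {A | ∃ (i : J) (t : ℝ) (V : Set (Y i)), 0 < t ∧ IsOpen V ∧ Convex ℝ V ∧ (0 : Y i) ∈ V ∧
        A = f i ⁻¹' (t • V)}

/-- All translates of elements of C₀(X); these generate the topology τ and the
σ-algebra F on X. -/
def projGen (f : ∀ i, X →ₗ[ℝ] Y i) : Set (Set X) :=
  {B | ∃ A ∈ projC0 f, ∃ v : X, B = (fun a => v + a) '' A}

/-- Compatibility conditions of a projective system: each f_{ij} is continuous,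
f_{ii} = id, f_i = f_{ij} ∘ f_j and f_{ik} = f_{ij} ∘ f_{jk}. -/
structure IsProjSystem (f : ∀ i, X →ₗ[ℝ] Y i)
    (fij : ∀ i j, i ≤ j → (Y j →ₗ[ℝ] Y i)) : Prop where
  cont : ∀ i j (h : i ≤ j), Continuous (fij i j h)
  id_self : ∀ i, fij i i le_rfl = LinearMap.id
  factor : ∀ i j (h : i ≤ j) (x : X), f i x = fij i j h (f j x)
  comp : ∀ i j k (hij : i ≤ j) (hjk : j ≤ k) (y : Y k),
    fij i k (hij.trans hjk) y = fij i j hij (fij j k hjk y)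

variable {d : ℕ}

/-- Entropy on the projective limit: s(x) = inf over translates A of elements of C₀(X)
containing x of liminf_n |Λ(n)|⁻¹ log P(m_{Λ(n)} σ ∈ A). -/
def entX [FX : MeasurableSpace X] (f : ∀ i, X →ₗ[ℝ] Y i)
    (μ : Measure (Cfg d X)) (x : X) : EReal :=
  ⨅ A ∈ {A : Set X | A ∈ projGen f ∧ x ∈ A},
    Filter.liminf
      (fun n : ℕ => ((((box d 0 n).card : ℝ)⁻¹ : ℝ) : EReal) *
        ENNReal.log (μ {ξ | mAvg (box d 0 n) ξ ∈ A}))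
      Filter.atTop

/-- Finite-volume pressure on the projective limit:
p_Λ(λ) = |Λ|⁻¹ log E[exp λ(Σ_{z∈Λ} σ(z))], valued in [-∞,+∞]. -/
def pressX [FX : MeasurableSpace X] (μ : Measure (Cfg d X))
    (l : X →ₗ[ℝ] ℝ) (Λ : Finset (ZLat d)) : EReal :=
  (((Λ.card : ℝ)⁻¹ : ℝ) : EReal) *
    ENNReal.log (∫⁻ ξ, ENNReal.ofReal (Real.exp (l (∑ z ∈ Λ, ξ z))) ∂μ)

end Projective

variable {J : Type*} [Preorder J] [IsDirected J (· ≤ ·)] [Nonempty J]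
variable {X : Type*} [AddCommGroup X] [Module ℝ X]
variable {Y : J → Type*} [∀ i, AddCommGroup (Y i)] [∀ i, Module ℝ (Y i)]
  [∀ i, UniformSpace (Y i)] [∀ i, IsUniformAddGroup (Y i)] [∀ i, ContinuousSMul ℝ (Y i)]
  [∀ i, LocallyConvexSpace ℝ (Y i)] [∀ i, CompleteSpace (Y i)]
  [∀ i, TopologicalSpace.SeparableSpace (Y i)] [∀ i, TopologicalSpace.MetrizableSpace (Y i)]
  [∀ i, MeasurableSpace (Y i)] [∀ i, BorelSpace (Y i)]

/- ----------------------------------------------------------------------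
   Auxiliary lemmas
---------------------------------------------------------------------- -/

lemma aux_secondCountable (Z : Type*) [TopologicalSpace Z]
    [TopologicalSpace.PseudoMetrizableSpace Z] [TopologicalSpace.SeparableSpace Z] :
    SecondCountableTopology Z := by
  letI := TopologicalSpace.pseudoMetrizableSpacePseudoMetric Z
  exact UniformSpace.secondCountable_of_separable Z

/-- In a second-countable locally convex space, every open set is a countable union of
open convex sets. -/
lemma aux_open_eq_sUnion_convex {Z : Type*} [AddCommGroup Z] [Module ℝ Z]
    [TopologicalSpace Z] [IsTopologicalAddGroup Z] [ContinuousConstSMul ℝ Z]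
    [LocallyConvexSpace ℝ Z] [SecondCountableTopology Z] {O : Set Z} (hO : IsOpen O) :
    ∃ 𝒞 : Set (Set Z), 𝒞.Countable ∧ (∀ C ∈ 𝒞, IsOpen C ∧ Convex ℝ C) ∧ O = ⋃₀ 𝒞 := by
  classical
  obtain ⟨B, hBc, -, hB⟩ := TopologicalSpace.exists_countable_basis Z
  let g : Set Z → Set Z := fun b =>
    if h : ∃ C : Set Z, IsOpen C ∧ Convex ℝ C ∧ b ⊆ C ∧ C ⊆ O then h.choose else ∅
  refine ⟨g '' {b ∈ B | ∃ C : Set Z, IsOpen C ∧ Convex ℝ C ∧ b ⊆ C ∧ C ⊆ O},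
    (hBc.mono (Set.sep_subset _ _)).image _, ?_, ?_⟩
  · rintro C ⟨b, ⟨-, h⟩, rfl⟩
    simp only [g, dif_pos h]
    exact ⟨h.choose_spec.1, h.choose_spec.2.1⟩
  · apply Set.Subset.antisymm
    · intro y hy
      obtain ⟨s, ⟨hs_nhds, hconv⟩, hsub⟩ :=
        (LocallyConvexSpace.convex_basis (𝕜 := ℝ) y).mem_iff.mp (hO.mem_nhds hy)
      have hyint : y ∈ interior s := mem_interior_iff_mem_nhds.mpr hs_nhds
      obtain ⟨b, hbB, hyb, hbs⟩ := hB.exists_subset_of_mem_open hyint isOpen_interior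
      have hEx : ∃ C : Set Z, IsOpen C ∧ Convex ℝ C ∧ b ⊆ C ∧ C ⊆ O :=
        ⟨interior s, isOpen_interior, hconv.interior, hbs, interior_subset.trans hsub⟩
      refine Set.mem_sUnion.mpr ⟨g b, ⟨b, ⟨hbB, hEx⟩, rfl⟩, ?_⟩
      simp only [g, dif_pos hEx]
      exact hEx.choose_spec.2.2.1 hyb
    · rintro y ⟨C, ⟨b, ⟨-, h⟩, rfl⟩, hyC⟩
      simp only [g, dif_pos h] at hyC
      exact h.choose_spec.2.2.2 hyC

lemma aux_convex_preimage_add_const {Z : Type*} [AddCommGroup Z] [Module ℝ Z]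
    {C : Set Z} (hC : Convex ℝ C) (c : Z) :
    Convex ℝ ((fun y => y + c) ⁻¹' C) := by
  intro y1 h1 y2 h2 a b ha hb hab
  have h := hC h1 h2 ha hb hab
  have e : a • y1 + b • y2 + c = a • (y1 + c) + b • (y2 + c) := by
    have hc : a • c + b • c = c := by rw [← add_smul, hab, one_smul]
    rw [smul_add, smul_add, add_add_add_comm, hc]
  simpa only [Set.mem_preimage, e] using h

/-- Any element of `projGen f` containing a point `x` can be represented as
`{a | f i (a - x) ∈ W}` for some open convex `W ∋ 0`. -/
lemma aux_projGen_repr {f : ∀ i, X →ₗ[ℝ] Y i} {A : Set X} (hA : A ∈ projGen f)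
    {x : X} (hx : x ∈ A) :
    ∃ (i : J) (W : Set (Y i)), IsOpen W ∧ Convex ℝ W ∧ (0 : Y i) ∈ W ∧
      ∀ a : X, a ∈ A ↔ f i (a - x) ∈ W := by
  obtain ⟨A0, ⟨i, t, V, ht, hVo, hVc, hV0, rfl⟩, v, rfl⟩ := hA
  have hmem : ∀ a : X, (a ∈ (fun a => v + a) '' (f i ⁻¹' (t • V))) ↔ f i (a - v) ∈ t • V := by
    intro a
    constructor
    · rintro ⟨u, hu, rfl⟩
      simpa using hu
    · intro h
      exact ⟨a - v, h, by simp⟩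
  have hxv : f i (x - v) ∈ t • V := (hmem x).mp hx
  refine ⟨i, (fun y => y + f i (x - v)) ⁻¹' (t • V),
    (hVo.smul₀ ht.ne').preimage (continuous_id.add continuous_const),
    aux_convex_preimage_add_const (hVc.smul t) _, by simpa using hxv, ?_⟩
  intro a
  rw [hmem a]
  have : f i (a - v) = f i (a - x) + f i (x - v) := by
    rw [← map_add]
    congr 1
    abel
  rw [this]
  rfl

/-- Conversely, sets of this form belong to `projGen f`. -/
lemma aux_projGen_of_repr (f : ∀ i, X →ₗ[ℝ] Y i) (i : J) {W : Set (Y i)}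
    (hWo : IsOpen W) (hWc : Convex ℝ W) (hW0 : (0 : Y i) ∈ W) (x : X) :
    {a : X | f i (a - x) ∈ W} ∈ projGen f := by
  refine ⟨f i ⁻¹' ((1 : ℝ) • W), ⟨i, 1, W, one_pos, hWo, hWc, hW0, rfl⟩, x, ?_⟩
  rw [one_smul]
  ext a
  constructor
  · intro h
    exact ⟨a - x, h, by simp⟩
  · rintro ⟨u, hu, rfl⟩
    simpa using hu

lemma aux_univ_mem_projGen (f : ∀ i, X →ₗ[ℝ] Y i) : (Set.univ : Set X) ∈ projGen f := by
  obtain ⟨i⟩ := ‹Nonempty J›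
  have : {a : X | f i (a - 0) ∈ (Set.univ : Set (Y i))} = Set.univ := by
    ext a; simp
  rw [← this]
  exact aux_projGen_of_repr f i isOpen_univ convex_univ trivial 0

lemma aux_projGen_inter {f : ∀ i, X →ₗ[ℝ] Y i} {fij : ∀ i j, i ≤ j → (Y j →ₗ[ℝ] Y i)}
    (hsys : IsProjSystem f fij) {A B : Set X} (hA : A ∈ projGen f) (hB : B ∈ projGen f)
    {x : X} (hxA : x ∈ A) (hxB : x ∈ B) : A ∩ B ∈ projGen f := by
  obtain ⟨i, W1, h1o, h1c, h10, h1⟩ := aux_projGen_repr hA hxA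
  obtain ⟨j, W2, h2o, h2c, h20, h2⟩ := aux_projGen_repr hB hxB
  obtain ⟨k, hik, hjk⟩ := exists_ge_ge i j
  have hEq : A ∩ B =
      {a : X | f k (a - x) ∈ (fij i k hik ⁻¹' W1 ∩ fij j k hjk ⁻¹' W2)} := by
    ext a
    simp only [Set.mem_inter_iff, Set.mem_setOf_eq, Set.mem_preimage, h1 a, h2 a,
      hsys.factor i k hik (a - x), hsys.factor j k hjk (a - x)]
  rw [hEq]
  exact aux_projGen_of_repr f k
    (((h1o.preimage (hsys.cont i k hik)).inter (h2o.preimage (hsys.cont j k hjk))))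
    ((h1c.linear_preimage _).inter (h2c.linear_preimage _))
    (by simp [h10, h20]) x

/-- `projGen f` is a basis for the topology it generates (at any given point). -/
lemma aux_projGen_basis {f : ∀ i, X →ₗ[ℝ] Y i} {fij : ∀ i j, i ≤ j → (Y j →ₗ[ℝ] Y i)}
    (hsys : IsProjSystem f fij) [τX : TopologicalSpace X]
    (hτ : τX = TopologicalSpace.generateFrom (projGen f))
    {U : Set X} (hU : IsOpen U) {x : X} (hx : x ∈ U) :
    ∃ A ∈ projGen f, x ∈ A ∧ A ⊆ U := by
  have hb := TopologicalSpace.isTopologicalBasis_of_subbasis hτ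
  obtain ⟨V, hVb, hxV, hVU⟩ := hb.exists_subset_of_mem_open hx hU
  obtain ⟨F, ⟨hFfin, hFsub⟩, rfl⟩ := hVb
  refine ⟨⋂₀ F, ?_, hxV, hVU⟩
  clear hVU hU
  refine Set.Finite.induction_on
    (motive := fun F _ => F ⊆ projGen f → x ∈ ⋂₀ F → ⋂₀ F ∈ projGen f) F hFfin
    (fun _ _ => by rw [Set.sInter_empty]; exact aux_univ_mem_projGen f)
    ?_ hFsub hxV
  intro A F hAF hFfin ih hsub hx'
  rw [Set.sInter_insert] at hx' ⊢
  exact aux_projGen_inter hsys (hsub (Set.mem_insert _ _))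
    (ih (fun s hs => hsub (Set.mem_insert_of_mem _ hs)) hx'.2) hx'.1 hx'.2

/-- Each `f i` is measurable for the σ-algebra generated by `projGen f`. -/
lemma aux_f_measurable {f : ∀ i, X →ₗ[ℝ] Y i} [FX : MeasurableSpace X]
    (hF : FX = MeasurableSpace.generateFrom (projGen f)) (i : J) :
    Measurable (f i) := by
  haveI : SecondCountableTopology (Y i) := aux_secondCountable (Y i)
  apply measurable_of_isOpen
  intro O hO
  obtain ⟨𝒞, h𝒞c, h𝒞, rfl⟩ := aux_open_eq_sUnion_convex hO
  rw [Set.preimage_sUnion]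
  refine MeasurableSet.biUnion h𝒞c fun C hC => ?_
  obtain ⟨hCo, hCc⟩ := h𝒞 C hC
  by_cases hne : (f i ⁻¹' C).Nonempty
  · obtain ⟨x0, hx0⟩ := hne
    have hrepr : f i ⁻¹' C = {a : X | f i (a - x0) ∈ (fun y => y + f i x0) ⁻¹' C} := by
      ext a
      simp [map_sub, sub_add_cancel]
    rw [hrepr, hF]
    exact MeasurableSpace.measurableSet_generateFrom
      (aux_projGen_of_repr f i
        (hCo.preimage (continuous_id.add continuous_const))
        (aux_convex_preimage_add_const hCc _)
        (by simpa using hx0) x0)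
  · rw [Set.not_nonempty_iff_eq_empty.mp hne]
    exact MeasurableSet.empty

/-- Elementary `EReal` manipulation used in the exponential Chebyshev bound. -/
lemma aux_ereal_step {N : ℕ} (hN : 0 < N) {L P : EReal} (hL : L ≤ 0) {r : ℝ}
    (h : (((N : ℝ) * r : ℝ) : EReal) + L ≤ P) :
    (((N : ℝ)⁻¹ : ℝ) : EReal) * L ≤ (((N : ℝ)⁻¹ : ℝ) : EReal) * P + ((-r : ℝ) : EReal) := by
  have hNR : (0 : ℝ) < (N : ℝ) := by exact_mod_cast hN
  have hNinv : (0 : ℝ) < (N : ℝ)⁻¹ := by positivity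
  induction L using EReal.rec with
  | bot =>
    rw [EReal.coe_mul_bot_of_pos (by exact_mod_cast hNinv)]
    exact bot_le
  | top => exact absurd hL (by simp)
  | coe L =>
    induction P using EReal.rec with
    | bot =>
      rw [← EReal.coe_add] at h
      exact absurd (le_bot_iff.mp h) (EReal.coe_ne_bot _)
    | top =>
      rw [EReal.coe_mul_top_of_pos (by exact_mod_cast hNinv), EReal.top_add_coe]
      exact le_top
    | coe P =>
      rw [← EReal.coe_mul, ← EReal.coe_mul, ← EReal.coe_add, EReal.coe_le_coe_iff]
      rw [← EReal.coe_add, EReal.coe_le_coe_iff] at h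
      have hc : (N : ℝ)⁻¹ * (N : ℝ) = 1 := inv_mul_cancel₀ hNR.ne'
      have h2 : (N : ℝ)⁻¹ * ((N : ℝ) * r + L) ≤ (N : ℝ)⁻¹ * P :=
        mul_le_mul_of_nonneg_left h hNinv.le
      have h3 : (N : ℝ)⁻¹ * ((N : ℝ) * r + L) = r + (N : ℝ)⁻¹ * L := by
        rw [mul_add, ← mul_assoc, hc, one_mul]
      linarith

/-- upper bound s ≤ -p*: under the same hypotheses, with
p(λ) = lim_n p_{Λ(n)}(λ) (the limit exists) and p*(x) = sup_{λ∈X*}(λ(x) - p(λ)),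
one has s(x) ≤ -p*(x) for every x ∈ X. -/
theorem entropy_le_neg_pressure_conj {d : ℕ} (hd : 0 < d)
    (f : ∀ i, X →ₗ[ℝ] Y i) (fij : ∀ i j, i ≤ j → (Y j →ₗ[ℝ] Y i))
    (hsys : IsProjSystem f fij)
    [τX : TopologicalSpace X]
    (hτ : τX = TopologicalSpace.generateFrom (projGen f))
    [FX : MeasurableSpace X]
    (hF : FX = MeasurableSpace.generateFrom (projGen f))
    (μ : Measure (Cfg d X)) [IsProbabilityMeasure μ]
    (ℓ : ℕ) (hℓ : 0 < ℓ)
    (hcadi : ∀ i, ∃ g c : ℕ → ℝ, CadiParams d g c ∧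
      IsCadi (Measure.map (fun ξ : Cfg d X => fun z : ZLat d => f i (ξ z)) μ) g c)
    (hcl : ∀ i, ∃ t α : Set (Y i) → ℝ, ClParams t α ∧
      IsCl (Measure.map (fun ξ : Cfg d X => fun z : ZLat d => f i (ξ z)) μ) t α)
    (hinv : ∀ i, IsRlInv (Measure.map (fun ξ : Cfg d X => fun z : ZLat d => f i (ξ z)) μ) ℓ)
    (p : (X →ₗ[ℝ] ℝ) → EReal)
    (hp : ∀ l : X →ₗ[ℝ] ℝ, Continuous l →
      Tendsto (fun n : ℕ => pressX μ l (box d 0 n)) atTop (𝓝 (p l))) :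
    ∀ x : X, entX f μ x ≤
      - ⨆ l : {l : X →ₗ[ℝ] ℝ // Continuous l}, (((l.1 x : ℝ) : EReal) - p l.1) := by
  intro x
  -- it suffices to bound against each linear functional separately
  refine EReal.le_neg_of_le_neg (iSup_le fun l => EReal.le_neg_of_le_neg ?_)
  -- main estimate: for every ε > 0, s(x) ≤ p(l) + (ε - l x)
  have hmain : ∀ ε : ℝ, 0 < ε →
      entX f μ x ≤ p l.1 + ((-(l.1 x - ε) : ℝ) : EReal) := by
    intro ε hε
    -- a basic open set A ∋ x on which l > l x - ε
    have hUopen : IsOpen {a : X | l.1 x - ε < l.1 a} := isOpen_Ioi.preimage l.2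
    obtain ⟨A, hAproj, hxA, hAU⟩ := aux_projGen_basis hsys hτ hUopen
      (show x ∈ {a : X | l.1 x - ε < l.1 a} by simp [hε])
    obtain ⟨i, W, hWo, hWc, hW0, hWrepr⟩ := aux_projGen_repr hAproj hxA
    haveI : SecondCountableTopology (Y i) := aux_secondCountable (Y i)
    -- entropy is bounded by the liminf along A
    have hentA : entX f μ x ≤
        Filter.liminf
          (fun n : ℕ => ((((box d 0 n).card : ℝ)⁻¹ : ℝ) : EReal) *
            ENNReal.log (μ {ξ | mAvg (box d 0 n) ξ ∈ A}))
          Filter.atTop := by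
      exact iInf₂_le A ⟨hAproj, hxA⟩
    refine hentA.trans ?_
    -- pointwise exponential Chebyshev estimate, for n ≥ 1
    have hstep : ∀ n : ℕ, 1 ≤ n →
        ((((box d 0 n).card : ℝ)⁻¹ : ℝ) : EReal) *
            ENNReal.log (μ {ξ | mAvg (box d 0 n) ξ ∈ A})
          ≤ pressX μ l.1 (box d 0 n) + ((-(l.1 x - ε) : ℝ) : EReal) := by
      intro n hn
      set Λ : Finset (ZLat d) := box d 0 n with hΛ
      have hN : 0 < Λ.card := by
        refine Finset.card_pos.mpr ⟨fun _ => 0, ?_⟩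
        simp only [hΛ, box, Fintype.mem_piFinset, Finset.mem_Ico]
        intro k
        constructor
        · simp
        · simp only [Pi.zero_apply, zero_add]
          exact_mod_cast hn
      have hNR : (0 : ℝ) < (Λ.card : ℝ) := by exact_mod_cast hN
      set S : Set (Cfg d X) := {ξ | mAvg Λ ξ ∈ A} with hSdef
      -- measurability of the event S
      have hGm : Measurable (fun ξ : Cfg d X => f i (mAvg Λ ξ)) := by
        have h1 : Measurable (fun ξ : Cfg d X => ∑ z ∈ Λ, f i (ξ z)) :=
          Finset.measurable_sum _ fun z _ =>
            (aux_f_measurable hF i).comp (measurable_pi_apply z)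
        have h2 : Measurable (fun ξ : Cfg d X =>
            ((Λ.card : ℝ)⁻¹ : ℝ) • ∑ z ∈ Λ, f i (ξ z)) :=
          (continuous_const_smul ((Λ.card : ℝ)⁻¹)).measurable.comp h1
        convert h2 using 2 with ξ
        simp [mAvg, _root_.map_smul, map_sum]
      have hS : MeasurableSet S := by
        have : S = (fun ξ : Cfg d X => f i (mAvg Λ ξ)) ⁻¹'
            ((fun y => y - f i x) ⁻¹' W) := by
          ext ξ
          simp only [hSdef, Set.mem_setOf_eq, Set.mem_preimage, hWrepr (mAvg Λ ξ),
            map_sub]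
        rw [this]
        exact hGm ((hWo.preimage (continuous_id.sub continuous_const)).measurableSet)
      -- the Chebyshev bound
      have hpoint : ∀ ξ : Cfg d X,
          S.indicator (fun _ => ENNReal.ofReal (Real.exp ((Λ.card : ℝ) * (l.1 x - ε)))) ξ
            ≤ ENNReal.ofReal (Real.exp (l.1 (∑ z ∈ Λ, ξ z))) := by
        intro ξ
        by_cases hξ : ξ ∈ S
        · rw [Set.indicator_of_mem hξ]
          apply ENNReal.ofReal_le_ofReal
          apply Real.exp_le_exp.mpr
          have hmemA : mAvg Λ ξ ∈ A := hξ
          have hgt : l.1 x - ε < l.1 (mAvg Λ ξ) := hAU hmemA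
          have hsum : l.1 (∑ z ∈ Λ, ξ z) = (Λ.card : ℝ) * l.1 (mAvg Λ ξ) := by
            rw [show mAvg Λ ξ = ((Λ.card : ℝ)⁻¹ : ℝ) • ∑ z ∈ Λ, ξ z from rfl,
              _root_.map_smul, smul_eq_mul]
            field_simp
          rw [hsum]
          exact mul_le_mul_of_nonneg_left hgt.le hNR.le
        · rw [Set.indicator_of_notMem hξ]
          exact zero_le
      have hint : ENNReal.ofReal (Real.exp ((Λ.card : ℝ) * (l.1 x - ε))) * μ S
          ≤ ∫⁻ ξ, ENNReal.ofReal (Real.exp (l.1 (∑ z ∈ Λ, ξ z))) ∂μ := by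
        calc ENNReal.ofReal (Real.exp ((Λ.card : ℝ) * (l.1 x - ε))) * μ S
            = ∫⁻ ξ, S.indicator
                (fun _ => ENNReal.ofReal (Real.exp ((Λ.card : ℝ) * (l.1 x - ε)))) ξ ∂μ := by
              rw [lintegral_indicator hS, setLIntegral_const]
          _ ≤ _ := lintegral_mono hpoint
      have hkey : (((Λ.card : ℝ) * (l.1 x - ε) : ℝ) : EReal) + ENNReal.log (μ S)
          ≤ ENNReal.log (∫⁻ ξ, ENNReal.ofReal (Real.exp (l.1 (∑ z ∈ Λ, ξ z))) ∂μ) := by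
        have := ENNReal.log_monotone hint
        rwa [ENNReal.log_mul_add, ENNReal.log_ofReal_of_pos (Real.exp_pos _),
          Real.log_exp] at this
      have hL0 : ENNReal.log (μ S) ≤ 0 := ENNReal.log_le_zero_iff.mpr prob_le_one
      exact aux_ereal_step hN hL0 hkey
    have hle : Filter.liminf
        (fun n : ℕ => ((((box d 0 n).card : ℝ)⁻¹ : ℝ) : EReal) *
          ENNReal.log (μ {ξ | mAvg (box d 0 n) ξ ∈ A}))
        Filter.atTop
        ≤ Filter.liminf
            (fun n : ℕ => pressX μ l.1 (box d 0 n) + ((-(l.1 x - ε) : ℝ) : EReal))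
            Filter.atTop :=
      Filter.liminf_le_liminf (Filter.eventually_atTop.mpr ⟨1, hstep⟩)
    refine hle.trans ?_
    -- the liminf of the shifted pressures is p(l) + (ε - l x)
    have htend : Tendsto
        (fun n : ℕ => pressX μ l.1 (box d 0 n) + ((-(l.1 x - ε) : ℝ) : EReal))
        atTop (𝓝 (p l.1 + ((-(l.1 x - ε) : ℝ) : EReal))) := by
      have hc : ContinuousAt (fun q : EReal × EReal => q.1 + q.2)
          (p l.1, ((-(l.1 x - ε) : ℝ) : EReal)) :=
        EReal.continuousAt_add (Or.inr (EReal.coe_ne_bot _)) (Or.inr (EReal.coe_ne_top _))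
      exact hc.tendsto.comp (((hp l.1 l.2)).prodMk_nhds tendsto_const_nhds)
    rw [htend.liminf_eq]
  -- pass to the limit ε → 0
  have htri : p l.1 = ⊥ ∨ p l.1 = ⊤ ∨ ∃ c : ℝ, p l.1 = (c : EReal) := by
    induction p l.1 using EReal.rec with
    | bot => exact Or.inl rfl
    | top => exact Or.inr (Or.inl rfl)
    | coe c => exact Or.inr (Or.inr ⟨c, rfl⟩)
  rcases htri with hP | hP | ⟨c, hP⟩
  · have := hmain 1 one_pos
    rw [hP, EReal.bot_add] at this
    exact this.trans bot_le
  · rw [hP]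
    have : ((l.1 x : ℝ) : EReal) - ⊤ = ⊥ := by
      rw [sub_eq_add_neg, EReal.neg_top, EReal.add_bot]
    rw [this, EReal.neg_bot]
    exact le_top
  · rw [hP]
    have hRHS : -(((l.1 x : ℝ) : EReal) - (c : EReal)) = ((c - l.1 x : ℝ) : EReal) := by
      norm_cast
      ring
    rw [hRHS]
    refine le_of_forall_gt_imp_ge_of_dense fun b hb => ?_
    induction b using EReal.rec with
    | bot => exact absurd hb (by simp)
    | top => exact le_top
    | coe b =>
      have hbR : c - l.1 x < b := by exact_mod_cast hb
      have hε : 0 < b - (c - l.1 x) := by linarith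
      have := hmain (b - (c - l.1 x)) hε
      rw [hP] at this
      refine this.trans (le_of_eq ?_)
      norm_cast
      ring
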